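/- (Matrix case.) Let Ω ⊆ [n₁]×[n₂] and Q_{ij} ≠ 0 real for (i,j) ∈ Ω. Suppose the homogeneous system x_i + y_j = 0, (i,j) ∈ Ω, with x₁ = 0 has only the zero solution. If a rank-one completion Q_{ij} = a_i b_j with a₁ = 1 exists over ℝ, then it is globally unique: any a', b' with a'₁ = 1 and Q_{ij} = a'_i b'_j for all (i,j) ∈ Ω satisfies a'_i = a_i and b'_j = b_j for all indices i, j appearing in Ω. -/

import Mathlib

/-- Matrix case over `ℝ`: nondegeneracy of the homogeneous system implies
global uniqueness of the normalized rank-one completion. -/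
theorem matrix_real_global_uniqueness
    (n₁ n₂ : ℕ)
    (Ω : Finset (Fin (n₁ + 1) × Fin (n₂ + 1)))
    (Q : Fin (n₁ + 1) × Fin (n₂ + 1) → ℝ)
    (hQ : ∀ t ∈ Ω, Q t ≠ 0)
    (hA : ∀ x : Fin (n₁ + 1) → ℝ, ∀ y : Fin (n₂ + 1) → ℝ,
      x 0 = 0 → (∀ t ∈ Ω, x t.1 + y t.2 = 0) →
      ∀ t ∈ Ω, x t.1 = 0 ∧ y t.2 = 0)
    (a : Fin (n₁ + 1) → ℝ) (b : Fin (n₂ + 1) → ℝ)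
    (ha0 : a 0 = 1)
    (hsol : ∀ t ∈ Ω, Q t = a t.1 * b t.2) :
    ∀ a' : Fin (n₁ + 1) → ℝ, ∀ b' : Fin (n₂ + 1) → ℝ,
      a' 0 = 1 → (∀ t ∈ Ω, Q t = a' t.1 * b' t.2) →
      ∀ t ∈ Ω, a' t.1 = a t.1 ∧ b' t.2 = b t.2 := by
  intro a' b' ha'0 hsol'
  -- nonvanishing on Ω
  have hane : ∀ t ∈ Ω, a t.1 ≠ 0 := by
    intro t ht h
    exact hQ t ht (by rw [hsol t ht, h, zero_mul])
  have hbne : ∀ t ∈ Ω, b t.2 ≠ 0 := by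
    intro t ht h
    exact hQ t ht (by rw [hsol t ht, h, mul_zero])
  have ha'ne : ∀ t ∈ Ω, a' t.1 ≠ 0 := by
    intro t ht h
    exact hQ t ht (by rw [hsol' t ht, h, zero_mul])
  have hb'ne : ∀ t ∈ Ω, b' t.2 ≠ 0 := by
    intro t ht h
    exact hQ t ht (by rw [hsol' t ht, h, mul_zero])
  -- Step 1: absolute values agree, via logs
  have habs : ∀ t ∈ Ω, |a' t.1| = |a t.1| ∧ |b' t.2| = |b t.2| := by
    have h1 := hA (fun i => Real.log |a' i| - Real.log |a i|)
      (fun j => Real.log |b' j| - Real.log |b j|)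
      (by simp [ha0, ha'0])
      (by
        intro t ht
        have h := (hsol t ht).symm.trans (hsol' t ht)
        have habs : |a t.1| * |b t.2| = |a' t.1| * |b' t.2| := by
          rw [← abs_mul, ← abs_mul, h]
        have := congrArg Real.log habs
        rw [Real.log_mul (abs_ne_zero.2 (hane t ht)) (abs_ne_zero.2 (hbne t ht)),
          Real.log_mul (abs_ne_zero.2 (ha'ne t ht)) (abs_ne_zero.2 (hb'ne t ht))] at this
        linarith)
    intro t ht
    obtain ⟨hx, hy⟩ := h1 t ht
    constructor
    · have hl : Real.log |a' t.1| = Real.log |a t.1| := by linarith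
      have := congrArg Real.exp hl
      rwa [Real.exp_log (abs_pos.2 (ha'ne t ht)),
        Real.exp_log (abs_pos.2 (hane t ht))] at this
    · have hl : Real.log |b' t.2| = Real.log |b t.2| := by linarith
      have := congrArg Real.exp hl
      rwa [Real.exp_log (abs_pos.2 (hb'ne t ht)),
        Real.exp_log (abs_pos.2 (hbne t ht))] at this
  -- Step 2: signs agree, via ratios
  have h2 := hA (fun i => a' i / a i - 1) (fun j => 1 - b' j / b j)
    (by simp [ha0, ha'0])
    (by
      intro t ht
      -- need a' i / a i = b' j / b j
      have hane' := hane t ht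
      have hbne' := hbne t ht
      have ha'ne' := ha'ne t ht
      have h := (hsol t ht).symm.trans (hsol' t ht)
      have hr : (a' t.1 / a t.1) * (b' t.2 / b t.2) = 1 := by
        field_simp
        linarith [h]
      have habs' := (habs t ht).1
      -- a' t.1 / a t.1 = ±1
      have hsq : (a' t.1 / a t.1) = 1 ∨ (a' t.1 / a t.1) = -1 := by
        have : |a' t.1 / a t.1| = 1 := by
          rw [abs_div, habs', div_self (abs_ne_zero.2 hane')]
        rcases abs_eq (by norm_num : (0:ℝ) ≤ 1) |>.1 this with h | h
        · exact Or.inl h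
        · exact Or.inr h
      rcases hsq with h1 | h1
      · rw [h1] at hr ⊢; linarith [hr]
      · rw [h1] at hr ⊢; linarith [hr])
  intro t ht
  obtain ⟨hx, hy⟩ := h2 t ht
  have hane' := hane t ht
  have hbne' := hbne t ht
  constructor
  · have : a' t.1 / a t.1 = 1 := by linarith
    field_simp at this
    exact this
  · have : b' t.2 / b t.2 = 1 := by linarith
    field_simp at this
    exact this
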